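/- Let m = (ξ_A, ξ_B) be a compatible net counter-clockwise motion from P₀ = (A₀,B₀) to P₁ = (A₁,B₁), with traces C_A = ξ_A([0,1]) and C_B = ξ_B([0,1]). Then for every θ ∈ ℝ, h_{C_A}(θ) + h_{C_B}(θ + π) ≥ H_AB(θ), and for every r ∈ [0,Δ], h_{C_A}(θ₀ + r) + h_{C_B}(θ₀ + r + π) ≥ max(H_AB(θ₀ + r), s). -/

import Mathlib

open Set Real RealInnerProductSpace

noncomputable section

/-- The Euclidean plane ℝ². -/
abbrev Plane := EuclideanSpace ℝ (Fin 2)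

/-- Unit vector at angle `θ`. -/
def uvec (θ : ℝ) : Plane := WithLp.toLp 2 ![Real.cos θ, Real.sin θ]

/-- Support function of a set `C ⊆ ℝ²` at angle `θ`. -/
def supp (C : Set Plane) (θ : ℝ) : ℝ := sSup ((fun x => ⟪x, uvec θ⟫) '' C)

/-- Length of a curve: its total variation on `[0,1]`. -/
def plen (ξ : ℝ → Plane) : ℝ := (eVariationOn ξ (Icc 0 1)).toReal

/-- A compatible motion of two discs with radius sum `s` from placement `(A₀,B₀)`
to placement `(A₁,B₁)`. -/
structure IsCompatMotion (s : ℝ) (A₀ B₀ A₁ B₁ : Plane) (ξA ξB : ℝ → Plane) : Prop where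
  contA : ContinuousOn ξA (Icc 0 1)
  contB : ContinuousOn ξB (Icc 0 1)
  bvA : BoundedVariationOn ξA (Icc 0 1)
  bvB : BoundedVariationOn ξB (Icc 0 1)
  startA : ξA 0 = A₀
  stopA : ξA 1 = A₁
  startB : ξB 0 = B₀
  stopB : ξB 1 = B₁
  compat : ∀ t ∈ Icc (0:ℝ) 1, s ≤ ‖ξA t - ξB t‖

lemma uvec_norm_sq (θ : ℝ) : ⟪uvec θ, uvec θ⟫ = 1 := by
  simp only [uvec, PiLp.inner_apply, Fin.sum_univ_two, PiLp.toLp_apply, Matrix.cons_val_zero,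
    Matrix.cons_val_one, Matrix.head_cons, RCLike.inner_apply, conj_trivial]
  ring_nf
  rw [add_comm]
  exact Real.sin_sq_add_cos_sq θ

lemma uvec_add_pi (θ : ℝ) : uvec (θ + π) = -uvec θ := by
  ext i
  fin_cases i <;> simp [uvec, Real.cos_add_pi, Real.sin_add_pi]

lemma uvec_period (θ : ℝ) (k : ℤ) : uvec (θ + 2 * π * k) = uvec θ := by
  have h : θ + 2 * π * k = θ + k * (2 * π) := by ring
  ext i
  fin_cases i <;>
    simp [uvec, h, Real.cos_add_int_mul_two_pi, Real.sin_add_int_mul_two_pi]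

lemma le_supp {ξ : ℝ → Plane} (hc : ContinuousOn ξ (Icc 0 1)) {t : ℝ}
    (ht : t ∈ Icc (0:ℝ) 1) (θ : ℝ) : ⟪ξ t, uvec θ⟫ ≤ supp (ξ '' Icc 0 1) θ := by
  have hK : IsCompact (ξ '' Icc 0 1) := isCompact_Icc.image_of_continuousOn hc
  have hf : Continuous fun x : Plane => ⟪x, uvec θ⟫ :=
    Continuous.inner continuous_id continuous_const
  have hbdd : BddAbove ((fun x : Plane => ⟪x, uvec θ⟫) '' (ξ '' Icc 0 1)) :=
    (hK.image hf).bddAbove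
  exact le_csSup hbdd ⟨ξ t, mem_image_of_mem _ ht, rfl⟩

/-- for a compatible net counter-clockwise motion with traces
`C_A, C_B`: for every `θ`, `h_{C_A}(θ) + h_{C_B}(θ+π) ≥ H_AB(θ)`, and for every
`r ∈ [0,Δ]`, `h_{C_A}(θ₀+r) + h_{C_B}(θ₀+r+π) ≥ max(H_AB(θ₀+r), s)`, where
`H_AB(θ) = max(⟨A₀,u θ⟩,⟨A₁,u θ⟩) + max(⟨B₀,u (θ+π)⟩,⟨B₁,u (θ+π)⟩)`. -/
theorem support_pointwise_lower_bound_of_netCCW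
    (s : ℝ) (hs : 0 < s) (A₀ B₀ A₁ B₁ : Plane) (ξA ξB : ℝ → Plane)
    (hm : IsCompatMotion s A₀ B₀ A₁ B₁ ξA ξB)
    (θm : ℝ → ℝ) (hθcont : ContinuousOn θm (Icc 0 1))
    (hlift : ∀ t ∈ Icc (0:ℝ) 1, ξA t - ξB t = ‖ξA t - ξB t‖ • uvec (θm t))
    (Δ : ℝ) (hΔ0 : 0 ≤ Δ) (hΔlt : Δ < 2 * π)
    (hΔ : ∃ k : ℤ, θm 1 = θm 0 + Δ + 2 * π * k)
    (hccw : ∀ r ∈ Icc 0 Δ, ∃ t ∈ Icc (0:ℝ) 1, ∃ k : ℤ, θm t = θm 0 + r + 2 * π * k) :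
    (∀ θ : ℝ,
      max ⟪A₀, uvec θ⟫ ⟪A₁, uvec θ⟫ + max ⟪B₀, uvec (θ + π)⟫ ⟪B₁, uvec (θ + π)⟫ ≤
        supp (ξA '' Icc 0 1) θ + supp (ξB '' Icc 0 1) (θ + π)) ∧
    (∀ r ∈ Icc 0 Δ,
      max (max ⟪A₀, uvec (θm 0 + r)⟫ ⟪A₁, uvec (θm 0 + r)⟫ +
           max ⟪B₀, uvec (θm 0 + r + π)⟫ ⟪B₁, uvec (θm 0 + r + π)⟫) s ≤
        supp (ξA '' Icc 0 1) (θm 0 + r) + supp (ξB '' Icc 0 1) (θm 0 + r + π)) := by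
  have h01 : (0:ℝ) ∈ Icc (0:ℝ) 1 := by constructor <;> norm_num
  have h11 : (1:ℝ) ∈ Icc (0:ℝ) 1 := by constructor <;> norm_num
  have hfirst : ∀ θ : ℝ,
      max ⟪A₀, uvec θ⟫ ⟪A₁, uvec θ⟫ + max ⟪B₀, uvec (θ + π)⟫ ⟪B₁, uvec (θ + π)⟫ ≤
        supp (ξA '' Icc 0 1) θ + supp (ξB '' Icc 0 1) (θ + π) := by
    intro θ
    have hA : max ⟪A₀, uvec θ⟫ ⟪A₁, uvec θ⟫ ≤ supp (ξA '' Icc 0 1) θ := by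
      apply max_le
      · rw [← hm.startA]; exact le_supp hm.contA h01 θ
      · rw [← hm.stopA]; exact le_supp hm.contA h11 θ
    have hB : max ⟪B₀, uvec (θ + π)⟫ ⟪B₁, uvec (θ + π)⟫ ≤ supp (ξB '' Icc 0 1) (θ + π) := by
      apply max_le
      · rw [← hm.startB]; exact le_supp hm.contB h01 (θ + π)
      · rw [← hm.stopB]; exact le_supp hm.contB h11 (θ + π)
    exact add_le_add hA hB
  refine ⟨hfirst, ?_⟩
  intro r hr
  obtain ⟨t, ht, k, hk⟩ := hccw r hr
  apply max_le
  · exact hfirst (θm 0 + r)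
  · have huv : uvec (θm t) = uvec (θm 0 + r) := by rw [hk]; exact uvec_period _ k
    have hinner : ⟪ξA t - ξB t, uvec (θm t)⟫ = ‖ξA t - ξB t‖ := by
      conv_lhs => rw [hlift t ht]
      rw [real_inner_smul_left, uvec_norm_sq, mul_one]
    have hs' : s ≤ ⟪ξA t, uvec (θm 0 + r)⟫ + ⟪ξB t, uvec (θm 0 + r + π)⟫ := by
      rw [uvec_add_pi, inner_neg_right, ← huv, ← sub_eq_add_neg, ← inner_sub_left, hinner]
      exact hm.compat t ht
    calc s ≤ ⟪ξA t, uvec (θm 0 + r)⟫ + ⟪ξB t, uvec (θm 0 + r + π)⟫ := hs'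
      _ ≤ _ := add_le_add (le_supp hm.contA ht _) (le_supp hm.contB ht _)
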